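/- arXiv:0704.0074 — 10 statements merged into one kernel-verified Lean document; each statement's English description precedes it below -/
import Mathlib

section
/- Let T be a ring and W a left T-module. W is locally projective (in the sense of Zimmermann-Huisgen) if and only if for every finite subset {w_1,...,w_k} ⊆ W there exist finitely many pairs (f_i, w̃_i) in Hom_T(W,T) × W such that w_j = Σ_i f_i(w_j)·w̃_i for all j = 1,...,k. -/
/-- `W` is a locally projective left `T`-module (Zimmermann-Huisgen): for every
diagram with exact row `L → N → 0`, every finitely generated submodule `F ⊆ W`
and every `T`-linear `g : W → N` there is a `T`-linear `g' : W → L` with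
`g ∘ ι = π ∘ g' ∘ ι` on `F`. -/
def LocallyProjective (T W : Type) [Ring T] [AddCommGroup W] [Module T W] : Prop :=
  ∀ (L N : Type) [AddCommGroup L] [Module T L] [AddCommGroup N] [Module T N]
    (π : L →ₗ[T] N), Function.Surjective π →
      ∀ F : Submodule T W, F.FG →
        ∀ g : W →ₗ[T] N, ∃ g' : W →ₗ[T] L, ∀ x ∈ F, g x = π (g' x)

/-- `W` is locally projective iff for every finite subset `{w_1,…,w_k} ⊆ W` there
are finitely many pairs `(f_i, w̃_i) ∈ Hom_T(W,T) × W` such that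
`w_j = Σ_i f_i(w_j)·w̃_i` for all `j`. -/
theorem stmt_1 (T W : Type) [Ring T] [AddCommGroup W] [Module T W] :
    LocallyProjective T W ↔
      ∀ (k : ℕ) (w : Fin k → W), ∃ (n : ℕ) (f : Fin n → (W →ₗ[T] T)) (wt : Fin n → W),
        ∀ j, w j = ∑ i, f i (w j) • wt i := by
  classical
  constructor
  · intro hLP k w
    obtain ⟨g', hg'⟩ := hLP (W →₀ T) W (Finsupp.linearCombination T _root_.id)
      (fun x => ⟨Finsupp.single x 1, by simp⟩)
      (Submodule.span T (Set.range w)) (Submodule.fg_span (Set.finite_range w))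
      LinearMap.id
    set S : Finset W := Finset.univ.biUnion (fun j => (g' (w j)).support) with hS
    set e : Fin S.card ≃ S := S.equivFin.symm with he
    refine ⟨S.card, fun i => (Finsupp.lapply ((e i : W))).comp g', fun i => (e i : W), ?_⟩
    intro j
    have hmem : w j ∈ Submodule.span T (Set.range w) := Submodule.subset_span ⟨j, rfl⟩
    have h1 : w j = (Finsupp.linearCombination T _root_.id) (g' (w j)) := hg' (w j) hmem
    have hsub : (g' (w j)).support ⊆ S := by
      intro v hv
      exact Finset.mem_biUnion.2 ⟨j, Finset.mem_univ j, hv⟩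
    calc w j = (g' (w j)).sum fun v a => a • v := by
            conv_lhs => rw [h1]
            rw [Finsupp.linearCombination_apply]; rfl
      _ = ∑ v ∈ S, (g' (w j)) v • v :=
            Finsupp.sum_of_support_subset _ hsub _ (by simp)
      _ = ∑ v : S, (g' (w j)) (v : W) • (v : W) := (Finset.sum_coe_sort S _).symm
      _ = ∑ i, (g' (w j)) ((e i : W)) • (e i : W) :=
            (Fintype.sum_equiv e _ _ (fun i => rfl)).symm
      _ = ∑ i, ((Finsupp.lapply ((e i : W))).comp g') (w j) • (e i : W) := rfl
  · intro H L N _ _ _ _ π hπ F hF g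
    obtain ⟨s, hs⟩ := hF
    obtain ⟨n, f, wt, hw⟩ := H s.card (fun j => (s.equivFin.symm j : W))
    choose l hl using fun i => hπ (g (wt i))
    set g' : W →ₗ[T] L := ∑ i, (LinearMap.toSpanSingleton T L (l i)).comp (f i) with hg'
    refine ⟨g', ?_⟩
    have key : F ≤ LinearMap.ker (g - π.comp g') := by
      rw [← hs, Submodule.span_le]
      intro v hv
      obtain ⟨j, rfl⟩ : ∃ j, (s.equivFin.symm j : W) = v := ⟨s.equivFin ⟨v, hv⟩, by simp⟩
      simp only [SetLike.mem_coe, LinearMap.mem_ker, LinearMap.sub_apply,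
        LinearMap.comp_apply, sub_eq_zero]
      rw [hg', LinearMap.sum_apply, map_sum]
      conv_lhs => rw [hw j]
      rw [map_sum]
      refine Finset.sum_congr rfl fun i _ => ?_
      simp only [LinearMap.comp_apply, LinearMap.toSpanSingleton_apply]
      rw [map_smul, map_smul, hl]
    intro x hx
    have h2 := key hx
    rw [LinearMap.mem_ker, LinearMap.sub_apply, sub_eq_zero] at h2
    simpa using h2
end

section
/- Let T be a ring and W a left T-module with S := End(_T W)^op. Then W is locally projective if and only if the image of the canonical map [,]_W : Hom_T(W,T) ⊗_T W → End(_T W) is dense in End(_T W) with respect to the finite topology. -/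
/-- `W` is locally projective iff the image of the canonical map
`[,]_W : Hom_T(W,T) ⊗_T W → End(_T W)` is dense in the finite topology, i.e. for
every `g ∈ End(_T W)` and every finite subset `{w_1,…,w_k} ⊆ W` there is a finite
sum of rank-one maps `w' ↦ f_i(w')·w̃_i` (an element of the image of `[,]_W`)
agreeing with `g` on all the `w_j`. -/
theorem stmt_3 (T W : Type) [Ring T] [AddCommGroup W] [Module T W] :
    LocallyProjective T W ↔
      ∀ (g : W →ₗ[T] W) (k : ℕ) (w : Fin k → W),
        ∃ (n : ℕ) (f : Fin n → (W →ₗ[T] T)) (wt : Fin n → W),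
          ∀ j, g (w j) = ∑ i, f i (w j) • wt i := by
  classical
  constructor
  · intro hLP g k w
    obtain ⟨g', hg'⟩ := hLP (W →₀ T) W (Finsupp.linearCombination T _root_.id)
      (Finsupp.linearCombination_id_surjective T W)
      (Submodule.span T (Set.range w))
      (Submodule.fg_span (Set.finite_range w)) g
    set s : Finset W := Finset.univ.biUnion (fun j => (g' (w j)).support) with hs
    refine ⟨s.card, fun i => (Finsupp.lapply ((s.equivFin.symm i : W))).comp g',
      fun i => (s.equivFin.symm i : W), fun j => ?_⟩
    have hw : g (w j) = Finsupp.linearCombination T _root_.id (g' (w j)) :=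
      hg' (w j) (Submodule.subset_span ⟨j, rfl⟩)
    rw [hw, Finsupp.linearCombination_apply]
    have hsub : (g' (w j)).support ⊆ s := by
      intro a ha
      exact Finset.mem_biUnion.2 ⟨j, Finset.mem_univ j, ha⟩
    rw [Finsupp.sum_of_support_subset _ hsub _ (by intro a _; simp),
      ← Finset.sum_coe_sort s (fun a => (g' (w j)) a • _root_.id a)]
    exact Fintype.sum_equiv s.equivFin _ _ (fun a => by simp)
  · intro h L N _ _ _ _ π hπ F hF g
    obtain ⟨S, hS⟩ := hF
    obtain ⟨n, f, wt, hfw⟩ := h LinearMap.id S.card (fun i => (S.equivFin.symm i : W))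
    choose l hl using fun i => hπ (g (wt i))
    refine ⟨∑ i, (LinearMap.toSpanSingleton T L (l i)).comp (f i), fun x hx => ?_⟩
    have key : F ≤ LinearMap.eqLocus g
        (π.comp (∑ i, (LinearMap.toSpanSingleton T L (l i)).comp (f i))) := by
      rw [← hS, Submodule.span_le]
      intro a ha
      have hfa : a = ∑ i, f i a • wt i := by
        have := hfw (S.equivFin ⟨a, ha⟩)
        simpa using this
      rw [SetLike.mem_coe, LinearMap.mem_eqLocus]
      conv_lhs => rw [hfa]
      simp only [LinearMap.comp_apply, LinearMap.sum_apply, LinearMap.coe_comp,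
        Function.comp_apply, LinearMap.toSpanSingleton_apply, map_sum, map_smul, hl]
    exact key hx
end

section
/- Every semi-strict unital Morita context is strict: if M = (T,S,P,Q,<,>_T,<,>_S) is a unital Morita context with both <,>_T and <,>_S surjective, then both are bijective. -/
open MulOpposite

/-- `tp : P → Q → X` exhibits `X` as the balanced tensor product `P ⊗[S] Q` of a
right `S`-module `P` and a left `S`-module `Q`: it is biadditive, `S`-balanced,
and satisfies the universal property. -/
structure IsBalancedTensor (S : Type) [Ring S]
    (P : Type) [AddCommGroup P] [Module Sᵐᵒᵖ P]
    (Q : Type) [AddCommGroup Q] [Module S Q]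
    (X : Type) [AddCommGroup X] (tp : P → Q → X) : Prop where
  add_left : ∀ p p' q, tp (p + p') q = tp p q + tp p' q
  add_right : ∀ p q q', tp p (q + q') = tp p q + tp p q'
  balanced : ∀ p (s : S) q, tp (op s • p) q = tp p (s • q)
  lift : ∀ (Y : Type) [AddCommGroup Y] (f : P → Q → Y),
      (∀ p p' q, f (p + p') q = f p q + f p' q) →
      (∀ p q q', f p (q + q') = f p q + f p q') →
      (∀ p (s : S) q, f (op s • p) q = f p (s • q)) →
      ∃! g : X →+ Y, ∀ p q, g (tp p q) = f p q

/-- A pairing `b : M × N → R`, where `M` is an `(R,R')`-bimodule and `N` an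
`(R',R)`-bimodule, which is `(R,R)`-bilinear and `R'`-balanced. -/
structure IsPairing (R R' : Type) [Ring R] [Ring R']
    (M : Type) [AddCommGroup M] [Module R M] [Module R'ᵐᵒᵖ M]
    (N : Type) [AddCommGroup N] [Module R' N] [Module Rᵐᵒᵖ N]
    (b : M → N → R) : Prop where
  add_left : ∀ m m' n, b (m + m') n = b m n + b m' n
  add_right : ∀ m n n', b m (n + n') = b m n + b m n'
  smul_left : ∀ (r : R) m n, b (r • m) n = r * b m n
  smul_right : ∀ m (r : R) n, b m (op r • n) = b m n * r
  balanced : ∀ m (r' : R') n, b (op r' • m) n = b m (r' • n)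

lemma key_inj (T S P Q : Type) [Ring T] [Ring S]
    [AddCommGroup P] [Module T P] [Module Sᵐᵒᵖ P] [SMulCommClass T Sᵐᵒᵖ P]
    [AddCommGroup Q] [Module S Q] [Module Tᵐᵒᵖ Q]
    (bT : P → Q → T) (hbT : IsPairing T S P Q bT)
    (bS : Q → P → S)
    (hcomp1 : ∀ (q : Q) (p : P) (q' : Q), bS q p • q' = op (bT p q') • q)
    (hcomp2 : ∀ (p : P) (q : Q) (p' : P), op (bS q p') • p = bT p q • p')
    (X : Type) [AddCommGroup X] (tpX : P → Q → X)
    (hX : IsBalancedTensor S P Q X tpX)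
    (βT : X →+ T) (hβT : ∀ p q, βT (tpX p q) = bT p q)
    (hTsurj : Function.Surjective βT) : Function.Injective βT := by
  obtain ⟨x0, hx0⟩ := hTsurj 1
  -- the left T-action on X
  have Lspec : ∀ t : T, ∃! g : X →+ X, ∀ p q, g (tpX p q) = tpX (t • p) q := by
    intro t
    refine hX.lift X (fun p q => tpX (t • p) q) (fun p p' q => ?_) (fun p q q' => ?_)
      (fun p s q => ?_)
    · rw [smul_add, hX.add_left]
    · rw [hX.add_right]
    · rw [smul_comm, hX.balanced]
  set L : T → X →+ X := fun t => (Lspec t).choose with hLdef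
  have hL : ∀ t p q, L t (tpX p q) = tpX (t • p) q := fun t => (Lspec t).choose_spec.1
  have hLadd : ∀ t t', L (t + t') = L t + L t' := by
    intro t t'
    have h1 : ∀ p q, (L (t + t')) (tpX p q) = tpX ((t + t') • p) q := hL (t + t')
    have h2 : ∀ p q, (L t + L t') (tpX p q) = tpX ((t + t') • p) q := by
      intro p q
      simp only [AddMonoidHom.add_apply, hL, add_smul, hX.add_left]
    exact ((Lspec (t + t')).unique h1 h2)
  -- the maps M p q
  have Mspec : ∀ (p : P) (q : Q), ∃! g : X →+ X,
      ∀ a b, g (tpX a b) = tpX p (op (bT a b) • q) := by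
    intro p q
    refine hX.lift X (fun a b => tpX p (op (bT a b) • q)) (fun a a' b => ?_)
      (fun a b b' => ?_) (fun a s b => ?_)
    · rw [hbT.add_left, op_add, add_smul, hX.add_right]
    · rw [hbT.add_right, op_add, add_smul, hX.add_right]
    · rw [hbT.balanced]
  set M : P → Q → X →+ X := fun p q => (Mspec p q).choose with hMdef
  have hM : ∀ p q a b, M p q (tpX a b) = tpX p (op (bT a b) • q) :=
    fun p q => (Mspec p q).choose_spec.1
  -- M p q computed via βT
  have hMβ : ∀ p q x, M p q x = tpX p (op (βT x) • q) := by
    intro p q x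
    have : M p q = AddMonoidHom.mk' (fun x => tpX p (op (βT x) • q)) (by
        intro x y
        simp only [map_add, op_add, add_smul, hX.add_right]) := by
      refine (Mspec p q).unique (hM p q) ?_
      intro a b
      simp only [AddMonoidHom.mk'_apply, hβT]
    rw [this]; rfl
  -- L (bT p q) = M p q
  have hLM : ∀ p q, L (bT p q) = M p q := by
    intro p q
    refine (Lspec (bT p q)).unique (hL _) ?_
    intro a b
    rw [hM, ← hcomp1, ← hX.balanced, hcomp2]
  -- the retraction
  have hΦ : AddMonoidHom.mk' (fun x => L (βT x) x0) (by
      intro x y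
      simp only [map_add, hLadd, AddMonoidHom.add_apply]) = AddMonoidHom.id X := by
    refine ((hX.lift X tpX hX.add_left hX.add_right hX.balanced).unique ?_ ?_)
    · intro p q
      simp only [AddMonoidHom.mk'_apply, hβT, hLM, hMβ, hx0, op_one, one_smul]
    · intro p q; rfl
  intro x y hxy
  have h1 : L (βT x) x0 = x := congrFun (congrArg (fun f => f.toFun) hΦ) x
  have h2 : L (βT y) x0 = y := congrFun (congrArg (fun f => f.toFun) hΦ) y
  rw [← h1, ← h2, hxy]

variable (T S P Q : Type) [Ring T] [Ring S]
  [AddCommGroup P] [Module T P] [Module Sᵐᵒᵖ P] [SMulCommClass T Sᵐᵒᵖ P]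
  [AddCommGroup Q] [Module S Q] [Module Tᵐᵒᵖ Q] [SMulCommClass S Tᵐᵒᵖ Q]

/-- Every semi-strict unital Morita context is strict: if
`M = (T,S,P,Q,⟨,⟩_T,⟨,⟩_S)` is a unital Morita context and both connecting maps
`⟨,⟩_T : P ⊗_S Q → T` (realized as `βT` on `X`) and `⟨,⟩_S : Q ⊗_T P → S`
(realized as `βS` on `Y`) are surjective, then both are bijective. -/
theorem stmt_11 (bT : P → Q → T) (hbT : IsPairing T S P Q bT)
    (bS : Q → P → S) (hbS : IsPairing S T Q P bS)
    (hcomp1 : ∀ (q : Q) (p : P) (q' : Q), bS q p • q' = op (bT p q') • q)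
    (hcomp2 : ∀ (p : P) (q : Q) (p' : P), op (bS q p') • p = bT p q • p')
    (X : Type) [AddCommGroup X] (tpX : P → Q → X)
    (hX : IsBalancedTensor S P Q X tpX)
    (βT : X →+ T) (hβT : ∀ p q, βT (tpX p q) = bT p q)
    (Y : Type) [AddCommGroup Y] (tpY : Q → P → Y)
    (hY : IsBalancedTensor T Q P Y tpY)
    (βS : Y →+ S) (hβS : ∀ q p, βS (tpY q p) = bS q p)
    (hTsurj : Function.Surjective βT) (hSsurj : Function.Surjective βS) :
    Function.Bijective βT ∧ Function.Bijective βS := by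
  exact ⟨⟨key_inj T S P Q bT hbT bS hcomp1 hcomp2 X tpX hX βT hβT hTsurj, hTsurj⟩,
    ⟨key_inj S T Q P bS hbS bT (fun p q p' => (hcomp2 p q p').symm)
      (fun q p q' => (hcomp1 q p q').symm) Y tpY hY βS hβS hSsurj, hSsurj⟩⟩
end

section
/- Let M = (T,S,P,Q,<,>_T,<,>_S) be a Morita context with <,>_S injective, and let J := Im(<,>_S) ⊴ S. If J is strongly faithful as a left S-module (for every left S-module V, the map V → Hom_S(J,V), v ↦ (s ↦ sv), is injective), then for every left T-module U the canonical map α_U : Q ⊗_T U → Hom_{T}(P,U), Σ q_i ⊗ u_i ↦ (p ↦ Σ <p,q_i>_T u_i), is injective. -/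
open MulOpposite

namespace IsBalancedTensor

variable {S₀ : Type} [Ring S₀] {P₀ : Type} [AddCommGroup P₀] [Module S₀ᵐᵒᵖ P₀]
  {Q₀ : Type} [AddCommGroup Q₀] [Module S₀ Q₀]
  {X₀ : Type} [AddCommGroup X₀] {tp : P₀ → Q₀ → X₀}

theorem hom_ext (h : IsBalancedTensor S₀ P₀ Q₀ X₀ tp) {Y : Type} [AddCommGroup Y]
    (g1 g2 : X₀ →+ Y) (hg : ∀ p q, g1 (tp p q) = g2 (tp p q)) : g1 = g2 := by
  obtain ⟨g, _, hu⟩ := h.lift Y (fun p q => g1 (tp p q))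
    (fun p p' q => by rw [h.add_left, map_add])
    (fun p q q' => by rw [h.add_right, map_add])
    (fun p s q => by rw [h.balanced])
  rw [hu g1 fun p q => rfl, hu g2 fun p q => (hg p q).symm]

theorem tp_zero_left (h : IsBalancedTensor S₀ P₀ Q₀ X₀ tp) (q : Q₀) : tp 0 q = 0 := by
  have h0 := h.add_left 0 0 q
  rw [add_zero] at h0
  exact left_eq_add.mp h0

theorem tp_zero_right (h : IsBalancedTensor S₀ P₀ Q₀ X₀ tp) (p : P₀) : tp p 0 = 0 := by
  have h0 := h.add_right p 0 0
  rw [add_zero] at h0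
  exact left_eq_add.mp h0

end IsBalancedTensor

variable (T S P Q : Type) [Ring T] [Ring S]
  [AddCommGroup P] [Module T P] [Module Sᵐᵒᵖ P] [SMulCommClass T Sᵐᵒᵖ P]
  [AddCommGroup Q] [Module S Q] [Module Tᵐᵒᵖ Q] [SMulCommClass S Tᵐᵒᵖ Q]

/-- Let `M = (T,S,P,Q,⟨,⟩_T,⟨,⟩_S)` be a Morita context with `⟨,⟩_S` injective
(`βS` realizes `⟨,⟩_S` on a realization `X` of `Q ⊗_T P`, and its image is the
trace ideal `J`).  If `J` is strongly faithful as a left `S`-module (for every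
left `S`-module `V` the map `ζ_{J,V} : V → Hom_S(J,V)`, `v ↦ (s ↦ s•v)`, is
injective, i.e. `(∀ j ∈ J, j • v = 0) → v = 0`), then for every left `T`-module
`U` the canonical map `α_U : Q ⊗_T U → Hom_T(P,U)`,
`Σ qᵢ ⊗ uᵢ ↦ (p ↦ Σ ⟨p,qᵢ⟩_T uᵢ)`, is injective. -/
theorem stmt_12 (bT : P → Q → T) (hbT : IsPairing T S P Q bT)
    (bS : Q → P → S) (hbS : IsPairing S T Q P bS)
    (hcomp1 : ∀ (q : Q) (p : P) (q' : Q), bS q p • q' = op (bT p q') • q)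
    (hcomp2 : ∀ (p : P) (q : Q) (p' : P), op (bS q p') • p = bT p q • p')
    (X : Type) [AddCommGroup X] (tpX : Q → P → X)
    (hX : IsBalancedTensor T Q P X tpX)
    (βS : X →+ S) (hβS : ∀ q p, βS (tpX q p) = bS q p)
    (hSinj : Function.Injective βS)
    (hsf : ∀ (V : Type) [AddCommGroup V] [Module S V] (v : V),
      (∀ x : X, βS x • v = 0) → v = 0) :
    ∀ (U : Type) [AddCommGroup U] [Module T U]
      (Z : Type) [AddCommGroup Z] (tpZ : Q → U → Z),
      IsBalancedTensor T Q U Z tpZ →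
      ∀ (αU : Z →+ (P →ₗ[T] U)),
        (∀ (q : Q) (u : U) (p : P), αU (tpZ q u) p = bT p q • u) →
        Function.Injective αU := by
  intro U _ _ Z _ tpZ hZ αU hαU
  -- the S-action on Z : s • (tpZ q u) = tpZ (s • q) u
  have hlift : ∀ s : S, ∃! g : Z →+ Z, ∀ q u, g (tpZ q u) = tpZ (s • q) u := by
    intro s
    exact hZ.lift Z (fun q u => tpZ (s • q) u)
      (fun q q' u => by rw [smul_add, hZ.add_left])
      (fun q u u' => by rw [hZ.add_right])
      (fun q t u => by rw [smul_comm, hZ.balanced])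
  choose ψ hψ _ using hlift
  letI : Module S Z :=
    { smul := fun s z => ψ s z
      one_smul := fun z => by
        have : ψ 1 = AddMonoidHom.id Z := by
          apply hZ.hom_ext
          intro q u
          simp [hψ]
        show ψ 1 z = z
        rw [this]; rfl
      mul_smul := fun s1 s2 z => by
        have : ψ (s1 * s2) = (ψ s1).comp (ψ s2) := by
          apply hZ.hom_ext
          intro q u
          simp [hψ, mul_smul]
        show ψ (s1 * s2) z = ψ s1 (ψ s2 z)
        rw [this]; rfl
      smul_zero := fun s => (ψ s).map_zero
      smul_add := fun s x y => (ψ s).map_add x y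
      add_smul := fun s1 s2 z => by
        have : ψ (s1 + s2) = ψ s1 + ψ s2 := by
          apply hZ.hom_ext
          intro q u
          simp [hψ, add_smul, hZ.add_left]
        show ψ (s1 + s2) z = ψ s1 z + ψ s2 z
        rw [this]; rfl
      zero_smul := fun z => by
        have : ψ (0 : S) = 0 := by
          apply hZ.hom_ext
          intro q u
          simp [hψ, hZ.tp_zero_left]
        show ψ 0 z = 0
        rw [this]; rfl }
  -- key identity: ψ (bS q p) z = tpZ q (αU z p)
  have key : ∀ (q : Q) (p : P) (z : Z), ψ (bS q p) z = tpZ q (αU z p) := by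
    intro q p
    have hadd : ∀ z z' : Z, tpZ q (αU (z + z') p) = tpZ q (αU z p) + tpZ q (αU z' p) := by
      intro z z'
      rw [map_add, LinearMap.add_apply, hZ.add_right]
    have : ψ (bS q p) = AddMonoidHom.mk' (fun z => tpZ q (αU z p)) hadd := by
      apply hZ.hom_ext
      intro q' u
      simp only [AddMonoidHom.mk'_apply]
      rw [hψ, hcomp1, hZ.balanced, hαU]
    intro z
    rw [this]; rfl
  rintro z z' hzz'
  rw [← sub_eq_zero] at hzz' ⊢
  rw [← map_sub] at hzz'
  set w := z - z' with hw
  -- show (∀ x, βS x • w = 0)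
  have hgen : ∀ x : X, βS x • w = 0 := by
    have hadd : ∀ x y : X, ψ (βS (x + y)) w = ψ (βS x) w + ψ (βS y) w := by
      intro x y
      rw [map_add]
      have : ψ (βS x + βS y) = ψ (βS x) + ψ (βS y) := by
        apply hZ.hom_ext
        intro q u
        simp [hψ, add_smul, hZ.add_left]
      rw [this]; rfl
    have : AddMonoidHom.mk' (fun x => ψ (βS x) w) hadd = 0 := by
      apply hX.hom_ext
      intro q p
      show ψ (βS (tpX q p)) w = 0
      rw [hβS, key, hzz', LinearMap.zero_apply, hZ.tp_zero_right]
    intro x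
    show ψ (βS x) w = 0
    exact congrFun (congrArg (fun g => g.toFun) this) x
  exact hsf Z w hgen
end

section
/- Let T, S be unital rings, P a (T,S)-bimodule, E an injective cogenerator in the category of left T-modules, and #P := Hom_T(P, E), a left S-module. For any left S-module L, L is #P-cogenerated (embeds in a product (#P)^Λ) if and only if the canonical unit map η_{P,L} : L → Hom_T(P, P ⊗_S L), l ↦ (p ↦ p ⊗ l), is injective. -/
open MulOpposite

/-- The left `S`-module structure on `Hom_T(P,K)` induced by the right
`S`-action on `P`: `(s • f)(p) = f(p·s)`. -/
noncomputable instance homSModule (T S P : Type) [Ring T] [Ring S]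
    [AddCommGroup P] [Module T P] [Module Sᵐᵒᵖ P] [SMulCommClass T Sᵐᵒᵖ P]
    (K : Type) [AddCommGroup K] [Module T K] :
    Module S (P →ₗ[T] K) where
  smul s f :=
    { toFun := fun p => f (op s • p)
      map_add' := fun p p' => by show f (op s • (p + p')) = _; rw [smul_add, map_add]
      map_smul' := fun t p => by
        show f (op s • t • p) = t • f (op s • p)
        rw [← smul_comm t (op s) p, map_smul] }
  one_smul f := LinearMap.ext fun p => by
    show f (op (1 : S) • p) = f p
    rw [op_one, one_smul]
  mul_smul s s' f := LinearMap.ext fun p => by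
    show f (op (s * s') • p) = f (op s' • op s • p)
    rw [op_mul, mul_smul]
  smul_zero s := LinearMap.ext fun p => rfl
  smul_add s f g := LinearMap.ext fun p => rfl
  add_smul s s' f := LinearMap.ext fun p => by
    show f (op (s + s') • p) = f (op s • p) + f (op s' • p)
    rw [← map_add, ← add_smul]
    rfl
  zero_smul f := LinearMap.ext fun p => by
    show f (op (0 : S) • p) = 0
    have : (op (0 : S) : Sᵐᵒᵖ) = 0 := rfl
    rw [this, zero_smul, map_zero]

section Aux

variable {T S P L Z : Type} [Ring T] [Ring S]
  [AddCommGroup P] [Module T P] [Module Sᵐᵒᵖ P] [SMulCommClass T Sᵐᵒᵖ P]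
  [AddCommGroup L] [Module S L] [AddCommGroup Z] {tpZ : P → L → Z}

lemma IsBalancedTensor.addHom_ext (hZ : IsBalancedTensor S P L Z tpZ)
    {Y : Type} [AddCommGroup Y] (A B : Z →+ Y)
    (h : ∀ p l, A (tpZ p l) = B (tpZ p l)) : A = B := by
  obtain ⟨g, hg, hu⟩ := hZ.lift Y (fun p l => A (tpZ p l))
    (fun p p' l => by rw [hZ.add_left, map_add])
    (fun p l l' => by rw [hZ.add_right, map_add])
    (fun p s l => by rw [hZ.balanced])
  rw [hu A (fun _ _ => rfl), hu B (fun p l => (h p l).symm)]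

lemma IsBalancedTensor.zero_left (hZ : IsBalancedTensor S P L Z tpZ) (l : L) :
    tpZ 0 l = 0 := by
  have := hZ.add_left 0 0 l
  rw [add_zero] at this
  exact right_eq_add.mp this

lemma IsBalancedTensor.zero_right (hZ : IsBalancedTensor S P L Z tpZ) (p : P) :
    tpZ p 0 = 0 := by
  have := hZ.add_right p 0 0
  rw [add_zero] at this
  exact right_eq_add.mp this

/-- The `T`-action on `Z ≅ P ⊗[S] L` induced by the `T`-action on `P`. -/
noncomputable def IsBalancedTensor.tsmul (hZ : IsBalancedTensor S P L Z tpZ)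
    (t : T) : Z →+ Z :=
  (hZ.lift Z (fun p l => tpZ (t • p) l)
    (fun p p' l => by rw [smul_add, hZ.add_left])
    (fun p l l' => by rw [hZ.add_right])
    (fun p s l => by rw [smul_comm, hZ.balanced])).choose

lemma IsBalancedTensor.tsmul_spec (hZ : IsBalancedTensor S P L Z tpZ)
    (t : T) (p : P) (l : L) : hZ.tsmul t (tpZ p l) = tpZ (t • p) l :=
  (hZ.lift Z (fun p l => tpZ (t • p) l)
    (fun p p' l => by rw [smul_add, hZ.add_left])
    (fun p l l' => by rw [hZ.add_right])
    (fun p s l => by rw [smul_comm, hZ.balanced])).choose_spec.1 p l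

/-- The induced `T`-module structure on `Z ≅ P ⊗[S] L`. -/
noncomputable def IsBalancedTensor.tModule (hZ : IsBalancedTensor S P L Z tpZ) :
    Module T Z where
  smul t z := hZ.tsmul t z
  one_smul z := congrFun (congrArg (fun (A : Z →+ Z) => (A : Z → Z))
    (hZ.addHom_ext (hZ.tsmul 1) (AddMonoidHom.id Z)
      (fun p l => by rw [hZ.tsmul_spec, one_smul]; rfl))) z
  mul_smul t t' z := congrFun (congrArg (fun (A : Z →+ Z) => (A : Z → Z))
    (hZ.addHom_ext (hZ.tsmul (t * t')) ((hZ.tsmul t).comp (hZ.tsmul t'))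
      (fun p l => by
        show _ = hZ.tsmul t (hZ.tsmul t' (tpZ p l))
        rw [hZ.tsmul_spec, hZ.tsmul_spec, hZ.tsmul_spec, mul_smul]))) z
  smul_zero t := map_zero (hZ.tsmul t)
  smul_add t z z' := map_add (hZ.tsmul t) z z'
  add_smul t t' z := congrFun (congrArg (fun (A : Z →+ Z) => (A : Z → Z))
    (hZ.addHom_ext (hZ.tsmul (t + t')) (hZ.tsmul t + hZ.tsmul t')
      (fun p l => by
        show _ = hZ.tsmul t (tpZ p l) + hZ.tsmul t' (tpZ p l)
        rw [hZ.tsmul_spec, hZ.tsmul_spec, hZ.tsmul_spec, add_smul, hZ.add_left]))) z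
  zero_smul z := congrFun (congrArg (fun (A : Z →+ Z) => (A : Z → Z))
    (hZ.addHom_ext (hZ.tsmul 0) 0
      (fun p l => by
        show _ = (0 : Z)
        rw [hZ.tsmul_spec, zero_smul, hZ.zero_left]))) z

end Aux

variable (T S P Q : Type) [Ring T] [Ring S]
  [AddCommGroup P] [Module T P] [Module Sᵐᵒᵖ P] [SMulCommClass T Sᵐᵒᵖ P]
  [AddCommGroup Q] [Module S Q] [Module Tᵐᵒᵖ Q] [SMulCommClass S Tᵐᵒᵖ Q]

/-- Let `T, S` be unital rings, `P` a `(T,S)`-bimodule, `E` an injective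
cogenerator in the category of left `T`-modules, and `#P := Hom_T(P,E)` the
induced left `S`-module.  For any left `S`-module `L`, `L` is `#P`-cogenerated
(embeds `S`-linearly into a product `(#P)^Λ`) if and only if the unit map
`η_{P,L} : L → Hom_T(P, P ⊗_S L)`, `l ↦ (p ↦ p ⊗ l)`, is injective (here
`P ⊗_S L` is realized by `Z`, `tpZ`). -/
theorem stmt_14 (E : Type) [AddCommGroup E] [Module T E]
    (hEinj : Module.Injective T E)
    (hEcog : ∀ (M : Type) [AddCommGroup M] [Module T M] (m : M), m ≠ 0 →
      ∃ g : M →ₗ[T] E, g m ≠ 0)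
    (L : Type) [AddCommGroup L] [Module S L]
    (Z : Type) [AddCommGroup Z] (tpZ : P → L → Z)
    (hZ : IsBalancedTensor S P L Z tpZ) :
    (∃ (Λ : Type) (φ : L →ₗ[S] (Λ → (P →ₗ[T] E))), Function.Injective φ) ↔
      Function.Injective (fun l : L => fun p : P => tpZ p l) := by
  constructor
  · rintro ⟨Λ, φ, hφ⟩
    intro l l' h
    apply hφ
    funext lam
    refine LinearMap.ext fun p => ?_
    obtain ⟨g, hg, -⟩ := hZ.lift E (fun p l => φ l lam p)
      (fun p p' l => by rw [map_add])
      (fun p l l' => by rw [map_add]; rfl)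
      (fun p s l => by rw [map_smul φ s l]; rfl)
    have h1 : tpZ p l = tpZ p l' := congrFun h p
    calc φ l lam p = g (tpZ p l) := (hg p l).symm
      _ = g (tpZ p l') := by rw [h1]
      _ = φ l' lam p := hg p l'
  · intro hη
    letI : Module T Z := hZ.tModule
    refine ⟨Z →ₗ[T] E,
      { toFun := fun l => fun g =>
          { toFun := fun p => g (tpZ p l)
            map_add' := fun p p' => by rw [hZ.add_left, map_add]
            map_smul' := fun t p => by
              have ht : tpZ (t • p) l = t • tpZ p l := (hZ.tsmul_spec t p l).symm
              rw [ht, map_smul]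
              rfl }
        map_add' := fun l l' => by
          funext g
          refine LinearMap.ext fun p => ?_
          show g (tpZ p (l + l')) = g (tpZ p l) + g (tpZ p l')
          rw [hZ.add_right, map_add]
        map_smul' := fun s l => by
          funext g
          refine LinearMap.ext fun p => ?_
          show g (tpZ p (s • l)) = g (tpZ (op s • p) l)
          rw [hZ.balanced] }, ?_⟩
    intro l l' hll'
    apply hη
    funext p
    show tpZ p l = tpZ p l'
    by_contra hne
    obtain ⟨g, hg⟩ := hEcog Z (tpZ p l - tpZ p l') (sub_ne_zero.mpr hne)
    apply hg
    rw [map_sub]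
    have he : g (tpZ p l) = g (tpZ p l') := LinearMap.congr_fun (congrFun hll' g) p
    exact sub_eq_zero_of_eq he
end

section
/- Let M = (T,S,P,Q,<,>_T,<,>_S) be a unital Morita context with trace ideal I := Im(<,>_T) ⊴ T. Then every left T-module K with IK = K is P-generated: the evaluation map P ⊗_S Hom_T(P,K) → K is surjective. -/
open MulOpposite

variable (T S P Q : Type) [Ring T] [Ring S]
  [AddCommGroup P] [Module T P] [Module Sᵐᵒᵖ P] [SMulCommClass T Sᵐᵒᵖ P]
  [AddCommGroup Q] [Module S Q] [Module Tᵐᵒᵖ Q] [SMulCommClass S Tᵐᵒᵖ Q]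

/-- Let `M = (T,S,P,Q,⟨,⟩_T,⟨,⟩_S)` be a unital Morita context with trace ideal
`I = Im(⟨,⟩_T)`.  Every left `T`-module `K` with `IK = K` (every element of `K`
is a finite sum `Σ ⟨pⱼ,qⱼ⟩_T • kⱼ`) is `P`-generated: the evaluation map
`P ⊗_S Hom_T(P,K) → K` is surjective, i.e. every element of `K` is a finite sum
`Σ fᵢ(pᵢ)` with `fᵢ ∈ Hom_T(P,K)`, `pᵢ ∈ P`. -/
theorem stmt_15 (bT : P → Q → T) (hbT : IsPairing T S P Q bT)
    (bS : Q → P → S) (hbS : IsPairing S T Q P bS)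
    (hcomp1 : ∀ (q : Q) (p : P) (q' : Q), bS q p • q' = op (bT p q') • q)
    (hcomp2 : ∀ (p : P) (q : Q) (p' : P), op (bS q p') • p = bT p q • p')
    (K : Type) [AddCommGroup K] [Module T K]
    (hdiv : ∀ k : K, ∃ (n : ℕ) (p : Fin n → P) (q : Fin n → Q) (kk : Fin n → K),
      k = ∑ j, bT (p j) (q j) • kk j) :
    ∀ k : K, ∃ (n : ℕ) (p : Fin n → P) (f : Fin n → (P →ₗ[T] K)),
      k = ∑ i, f i (p i) := by
  intro k
  obtain ⟨n, p, q, kk, hk⟩ := hdiv k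
  refine ⟨n, p, fun j => { toFun := fun x => bT x (q j) • kk j, map_add' := ?_, map_smul' := ?_ }, ?_⟩
  · intro x y; rw [hbT.add_left, add_smul]
  · intro t x; simp only [RingHom.id_apply, hbT.smul_left, mul_smul]
  · exact hk
end

section
/- Let M = (T,S,P,Q,<,>_T,<,>_S) be a unital Morita context such that the pairing P_r = (Q, P_S) satisfies the α-condition (for every right S-module U, the map α_U : U ⊗_S P → Hom_{-S}(Q,U) induced by <,>_S is injective). Then for every left T-module K that is P-generated, the evaluation map ω_{P,K} : P ⊗_S Hom_T(P,K) → K is bijective; that is, Gen(_T P) = Stat^l(_T P_S). -/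
open MulOpposite

variable (T S P Q : Type) [Ring T] [Ring S]
  [AddCommGroup P] [Module T P] [Module Sᵐᵒᵖ P] [SMulCommClass T Sᵐᵒᵖ P]
  [AddCommGroup Q] [Module S Q] [Module Tᵐᵒᵖ Q] [SMulCommClass S Tᵐᵒᵖ Q]

/-- Let `M = (T,S,P,Q,⟨,⟩_T,⟨,⟩_S)` be a unital Morita context such that the
pairing `P_r = (Q, P_S)` satisfies the α-condition: for every left `S`-module
`W` the canonical map `P ⊗_S W → Hom_S(Q,W)`, `Σ pᵢ ⊗ wᵢ ↦ (q ↦ Σ ⟨q,pᵢ⟩_S wᵢ)`,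
is injective.  Then for every left `T`-module `K` that is `P`-generated, the
evaluation map `ω_{P,K} : P ⊗_S Hom_T(P,K) → K` is bijective; that is,
`Gen(_T P) = Stat^l(_T P_S)`. -/
theorem stmt_16 (bT : P → Q → T) (hbT : IsPairing T S P Q bT)
    (bS : Q → P → S) (hbS : IsPairing S T Q P bS)
    (hcomp1 : ∀ (q : Q) (p : P) (q' : Q), bS q p • q' = op (bT p q') • q)
    (hcomp2 : ∀ (p : P) (q : Q) (p' : P), op (bS q p') • p = bT p q • p')
    (halpha : ∀ (W : Type) [AddCommGroup W] [Module S W]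
      (Z : Type) [AddCommGroup Z] (tpZ : P → W → Z),
      IsBalancedTensor S P W Z tpZ →
      ∀ (a : Z →+ (Q → W)), (∀ (p : P) (w : W) (q : Q), a (tpZ p w) q = bS q p • w) →
        Function.Injective a) :
    ∀ (K : Type) [AddCommGroup K] [Module T K],
      (∀ k : K, ∃ (n : ℕ) (p : Fin n → P) (f : Fin n → (P →ₗ[T] K)),
        k = ∑ i, f i (p i)) →
      ∀ (Z : Type) [AddCommGroup Z] (tpZ : P → (P →ₗ[T] K) → Z),
        IsBalancedTensor S P (P →ₗ[T] K) Z tpZ →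
        ∀ (ω : Z →+ K), (∀ (p : P) (f : P →ₗ[T] K), ω (tpZ p f) = f p) →
          Function.Bijective ω := by
  intro K _ _ hgen Z _ tpZ hZ ω hω
  have smul_apply : ∀ (s : S) (w : P →ₗ[T] K) (p : P), (s • w) p = w (op s • p) :=
    fun s w p => rfl
  obtain ⟨a, ha, -⟩ := hZ.lift (Q → (P →ₗ[T] K))
    (fun p w q => bS q p • w)
    (fun p p' w => funext fun q => by
      show bS q (p + p') • w = bS q p • w + bS q p' • w
      rw [hbS.add_right]; exact add_smul _ _ _)
    (fun p w w' => funext fun q => by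
      show bS q p • (w + w') = bS q p • w + bS q p • w'
      exact smul_add _ _ _)
    (fun p s w => funext fun q => by
      show bS q (op s • p) • w = bS q p • s • w
      rw [hbS.smul_right]; exact mul_smul _ _ _)
  have ha' : ∀ (p : P) (w : P →ₗ[T] K) (q : Q), a (tpZ p w) q = bS q p • w := by
    intro p w q; rw [ha p w]
  have ainj := halpha (P →ₗ[T] K) Z tpZ hZ a ha'
  have key : ∀ (q : Q) (p' : P) (z : Z), (a z q) p' = bT p' q • ω z := by
    intro q p'
    obtain ⟨h, hh, huniq⟩ := hZ.lift K (fun p w => bT p' q • w p)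
      (fun p p'' w => by
        show bT p' q • w (p + p'') = bT p' q • w p + bT p' q • w p''
        rw [map_add, smul_add])
      (fun p w w' => by
        show bT p' q • (w + w') p = bT p' q • w p + bT p' q • w' p
        rw [LinearMap.add_apply, smul_add])
      (fun p s w => by
        show bT p' q • w (op s • p) = bT p' q • (s • w) p
        rw [smul_apply])
    let h1 : Z →+ K :=
      { toFun := fun z => (a z q) p'
        map_zero' := by show (a 0 q) p' = 0; rw [map_zero]; rfl
        map_add' := fun z z' => by
          show (a (z + z') q) p' = (a z q) p' + (a z' q) p'
          rw [map_add]; rfl }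
    let h2 : Z →+ K :=
      { toFun := fun z => bT p' q • ω z
        map_zero' := by show bT p' q • ω 0 = 0; rw [map_zero, smul_zero]
        map_add' := fun z z' => by
          show bT p' q • ω (z + z') = bT p' q • ω z + bT p' q • ω z'
          rw [map_add, smul_add] }
    have e1 : h1 = h := huniq h1 (fun p w => by
      show (a (tpZ p w) q) p' = bT p' q • w p
      rw [ha' p w q, smul_apply, hcomp2, map_smul])
    have e2 : h2 = h := huniq h2 (fun p w => by
      show bT p' q • ω (tpZ p w) = bT p' q • w p
      rw [hω])
    intro z
    show h1 z = h2 z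
    rw [e1, e2]
  constructor
  · rw [injective_iff_map_eq_zero]
    intro z hz
    apply ainj
    rw [map_zero]
    funext q
    apply LinearMap.ext
    intro p'
    show (a z q) p' = (0 : P →ₗ[T] K) p'
    rw [key q p' z, hz, smul_zero, LinearMap.zero_apply]
  · intro k
    obtain ⟨n, p, f, hk⟩ := hgen k
    refine ⟨∑ i, tpZ (p i) (f i), ?_⟩
    rw [map_sum, hk]
    exact Finset.sum_congr rfl fun i _ => hω (p i) (f i)
end

section
/- Let M = (T,S,P,Q,<,>_T,<,>_S) be a Morita context such that the right pairing Q_r = (P, Q_T) satisfies the α-condition. Then for every left T-module V, the natural map η_V : P ⊗_S (Q ⊗_T V) → V, p ⊗ (q ⊗ v) ↦ <p,q>_T v, is injective; i.e. the induced right wide Morita context is injective in its first natural transformation. -/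
open MulOpposite

variable (T S P Q : Type) [Ring T] [Ring S]
  [AddCommGroup P] [Module T P] [Module Sᵐᵒᵖ P] [SMulCommClass T Sᵐᵒᵖ P]
  [AddCommGroup Q] [Module S Q] [Module Tᵐᵒᵖ Q] [SMulCommClass S Tᵐᵒᵖ Q]

/-- Let `M = (T,S,P,Q,⟨,⟩_T,⟨,⟩_S)` be a Morita context such that the pairing
`P_r = (Q,P_S)` satisfies the α-condition: for every left `S`-module `W` the
map `P ⊗_S W → Hom_S(Q,W)`, `Σ pᵢ ⊗ wᵢ ↦ (q ↦ Σ ⟨q,pᵢ⟩_S wᵢ)`, is injective.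
Then for every left `T`-module `V` the natural map
`η_V : P ⊗_S (Q ⊗_T V) → V`, `p ⊗ (q ⊗ v) ↦ ⟨p,q⟩_T v`, is injective
(`Q ⊗_T V` is realized by `Z₁`, `tp₁`, with its canonical left `S`-module
structure, and `P ⊗_S (Q ⊗_T V)` by `Z₂`, `tp₂`). -/
theorem stmt_17 (bT : P → Q → T) (hbT : IsPairing T S P Q bT)
    (bS : Q → P → S) (hbS : IsPairing S T Q P bS)
    (hcomp1 : ∀ (q : Q) (p : P) (q' : Q), bS q p • q' = op (bT p q') • q)
    (hcomp2 : ∀ (p : P) (q : Q) (p' : P), op (bS q p') • p = bT p q • p')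
    (halpha : ∀ (W : Type) [AddCommGroup W] [Module S W]
      (Z : Type) [AddCommGroup Z] (tpZ : P → W → Z),
      IsBalancedTensor S P W Z tpZ →
      ∀ (a : Z →+ (Q → W)), (∀ (p : P) (w : W) (q : Q), a (tpZ p w) q = bS q p • w) →
        Function.Injective a) :
    ∀ (V : Type) [AddCommGroup V] [Module T V]
      (Z₁ : Type) [AddCommGroup Z₁] [Module S Z₁] (tp₁ : Q → V → Z₁),
      IsBalancedTensor T Q V Z₁ tp₁ →
      (∀ (s : S) (q : Q) (v : V), s • tp₁ q v = tp₁ (s • q) v) →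
      ∀ (Z₂ : Type) [AddCommGroup Z₂] (tp₂ : P → Z₁ → Z₂),
        IsBalancedTensor S P Z₁ Z₂ tp₂ →
        ∀ (η : Z₂ →+ V), (∀ (p : P) (q : Q) (v : V), η (tp₂ p (tp₁ q v)) = bT p q • v) →
          Function.Injective η := by
  intro V _ _ Z₁ _ _ tp₁ ht₁ hsmul Z₂ _ tp₂ ht₂ η hη
  -- key pointwise identity on Z₁
  have key : ∀ (p : P) (q : Q) (z : Z₁), tp₁ q (η (tp₂ p z)) = bS q p • z := by
    intro p q
    obtain ⟨g, hg, hu⟩ := ht₁.lift Z₁ (fun q' v => bS q p • tp₁ q' v)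
      (by intro q' q'' v; rw [ht₁.add_left, smul_add])
      (by intro q' v v'; rw [ht₁.add_right, smul_add])
      (by intro q' t v; rw [ht₁.balanced])
    have e₁ := hu (AddMonoidHom.mk' (fun z => bS q p • z) (fun a b => smul_add _ a b))
      (by intro q' v; simp)
    have e₂ := hu (AddMonoidHom.mk' (fun z => tp₁ q (η (tp₂ p z)))
        (by intro a b; rw [ht₂.add_right, map_add, ht₁.add_right]))
      (by
        intro q' v
        simp only [AddMonoidHom.mk'_apply]
        rw [hη, ← ht₁.balanced, ← hcomp1, ← hsmul])
    have h₁ := e₂.trans e₁.symm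
    intro z
    exact DFunLike.congr_fun h₁ z
  -- construct the map a : Z₂ →+ (Q → Z₁)
  obtain ⟨a, ha, hau⟩ := ht₂.lift (Q → Z₁) (fun p z => fun q => bS q p • z)
    (by intro p p' z; funext q; simp only [Pi.add_apply]; rw [hbS.add_right, add_smul])
    (by intro p z z'; funext q; simp only [Pi.add_apply]; rw [smul_add])
    (by intro p s z; funext q; rw [hbS.smul_right, mul_smul])
  have hinj := halpha Z₁ Z₂ tp₂ ht₂ a (fun p w q => by rw [ha])
  -- a x q = tp₁ q (η x)
  have ha2 : ∀ (x : Z₂) (q : Q), a x q = tp₁ q (η x) := by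
    have h₂ := hau (AddMonoidHom.mk' (fun x => fun q => tp₁ q (η x))
        (by intro x y; funext q; simp only [Pi.add_apply, map_add, ht₁.add_right]))
      (by
        intro p z
        funext q
        simp only [AddMonoidHom.mk'_apply]
        rw [key])
    intro x q
    rw [← h₂]
    rfl
  intro x y hxy
  apply hinj
  funext q
  rw [ha2, ha2, hxy]
end

section
/- Let M = (T,S,P,Q,<,>_T,<,>_S) be an injective unital Morita context (both <,>_T and <,>_S are injective), with trace ideals I = Im(<,>_T), J = Im(<,>_S). Then for every left T-module V satisfying Q ⊗_T V ≅ Hom_T(P,V) via the canonical map α_V (V ∈ D_l), the counit ω_{P,V} : P ⊗_S Hom_T(P,V) → V is an isomorphism if and only if the multiplication map ξ_{I,V} : I ⊗_T V → V is an isomorphism. -/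
open MulOpposite

namespace IsBalancedTensor

variable {R : Type} [Ring R] {M : Type} [AddCommGroup M] [Module Rᵐᵒᵖ M]
  {N : Type} [AddCommGroup N] [Module R N]
  {W : Type} [AddCommGroup W] {tp : M → N → W}

theorem ext_hom (h : IsBalancedTensor R M N W tp) {Y : Type} [AddCommGroup Y]
    (g g' : W →+ Y) (hgg : ∀ p q, g (tp p q) = g' (tp p q)) : g = g' := by
  obtain ⟨u, hu, huniq⟩ := h.lift Y (fun p q => g (tp p q))
    (fun p p' q => by beta_reduce; rw [h.add_left, map_add])
    (fun p q q' => by beta_reduce; rw [h.add_right, map_add])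
    (fun p s q => by beta_reduce; rw [h.balanced])
  rw [huniq g (fun p q => rfl), huniq g' (fun p q => (hgg p q).symm)]

noncomputable def liftHom (h : IsBalancedTensor R M N W tp) {Y : Type} [AddCommGroup Y]
    (f : M → N → Y)
    (h1 : ∀ p p' q, f (p + p') q = f p q + f p' q)
    (h2 : ∀ p q q', f p (q + q') = f p q + f p q')
    (h3 : ∀ p (s : R) q, f (op s • p) q = f p (s • q)) : W →+ Y :=
  (h.lift Y f h1 h2 h3).choose

theorem liftHom_apply (h : IsBalancedTensor R M N W tp) {Y : Type} [AddCommGroup Y]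
    (f : M → N → Y) (h1 h2 h3) (p : M) (q : N) :
    h.liftHom f h1 h2 h3 (tp p q) = f p q :=
  (h.lift Y f h1 h2 h3).choose_spec.1 p q

end IsBalancedTensor

variable (T S P Q : Type) [Ring T] [Ring S]
  [AddCommGroup P] [Module T P] [Module Sᵐᵒᵖ P] [SMulCommClass T Sᵐᵒᵖ P]
  [AddCommGroup Q] [Module S Q] [Module Tᵐᵒᵖ Q] [SMulCommClass S Tᵐᵒᵖ Q]

/-- Let `M = (T,S,P,Q,⟨,⟩_T,⟨,⟩_S)` be an injective unital Morita context (both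
connecting maps injective), with trace ideal `I = Im(⟨,⟩_T)`.  Here `X`
realizes `P ⊗_S Q` (with its right `T`-module structure), `βT` realizes
`⟨,⟩_T`, `Y` realizes `Q ⊗_T P` and `βS` realizes `⟨,⟩_S`.  For every left
`T`-module `V` with `Q ⊗_T V ≅ Hom_T(P,V)` via the canonical map `α_V`
(`V ∈ D_l`), the counit `ω_{P,V} : P ⊗_S Hom_T(P,V) → V` is an isomorphism if
and only if the multiplication map `ξ_{I,V} : I ⊗_T V → V` is an isomorphism
(here `I ⊗_T V` is presented, via the isomorphism `⟨,⟩_T : P ⊗_S Q ≅ I`, as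
`Z₃` realizing `X ⊗_T V`, with `ξ (x ⊗ v) = βT x • v`). -/
theorem stmt_18 (bT : P → Q → T) (hbT : IsPairing T S P Q bT)
    (bS : Q → P → S) (hbS : IsPairing S T Q P bS)
    (hcomp1 : ∀ (q : Q) (p : P) (q' : Q), bS q p • q' = op (bT p q') • q)
    (hcomp2 : ∀ (p : P) (q : Q) (p' : P), op (bS q p') • p = bT p q • p')
    (X : Type) [AddCommGroup X] [Module Tᵐᵒᵖ X] (tpX : P → Q → X)
    (hX : IsBalancedTensor S P Q X tpX)
    (hXr : ∀ (t : T) (p : P) (q : Q), op t • tpX p q = tpX p (op t • q))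
    (βT : X →+ T) (hβT : ∀ p q, βT (tpX p q) = bT p q)
    (hTinj : Function.Injective βT)
    (Y : Type) [AddCommGroup Y] (tpY : Q → P → Y)
    (hY : IsBalancedTensor T Q P Y tpY)
    (βS : Y →+ S) (hβS : ∀ q p, βS (tpY q p) = bS q p)
    (hSinj : Function.Injective βS)
    (V : Type) [AddCommGroup V] [Module T V]
    (Z₁ : Type) [AddCommGroup Z₁] (tp₁ : Q → V → Z₁)
    (hZ₁ : IsBalancedTensor T Q V Z₁ tp₁)
    (αV : Z₁ →+ (P →ₗ[T] V))
    (hαV : ∀ (q : Q) (v : V) (p : P), αV (tp₁ q v) p = bT p q • v)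
    (hDl : Function.Bijective αV)
    (Z₂ : Type) [AddCommGroup Z₂] (tp₂ : P → (P →ₗ[T] V) → Z₂)
    (hZ₂ : IsBalancedTensor S P (P →ₗ[T] V) Z₂ tp₂)
    (ω : Z₂ →+ V) (hω : ∀ (p : P) (f : P →ₗ[T] V), ω (tp₂ p f) = f p)
    (Z₃ : Type) [AddCommGroup Z₃] (tp₃ : X → V → Z₃)
    (hZ₃ : IsBalancedTensor T X V Z₃ tp₃)
    (ξ : Z₃ →+ V) (hξ : ∀ (x : X) (v : V), ξ (tp₃ x v) = βT x • v) :
    Function.Bijective ω ↔ Function.Bijective ξ := by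
  classical
  -- the inverse of `αV` as an additive equivalence
  let e : Z₁ ≃+ (P →ₗ[T] V) := AddEquiv.ofBijective αV hDl
  have he : ∀ z : Z₁, e z = αV z := fun z => rfl
  -- `s • αV (tp₁ q v) = αV (tp₁ (s • q) v)`
  have hsα : ∀ (s : S) (q : Q) (v : V), s • αV (tp₁ q v) = αV (tp₁ (s • q) v) := by
    intro s q v
    apply LinearMap.ext; intro p
    show αV (tp₁ q v) (op s • p) = _
    rw [hαV, hαV, hbT.balanced]
  -- `g v : X →+ Z₂`, sending `tpX p q ↦ tp₂ p (αV (tp₁ q v))`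
  let g : V → (X →+ Z₂) := fun v => hX.liftHom (fun p q => tp₂ p (αV (tp₁ q v)))
    (fun p p' q => by beta_reduce; exact hZ₂.add_left _ _ _)
    (fun p q q' => by beta_reduce; rw [hZ₁.add_left, map_add, hZ₂.add_right])
    (fun p s q => by beta_reduce; rw [hZ₂.balanced, hsα])
  have hg : ∀ v p q, g v (tpX p q) = tp₂ p (αV (tp₁ q v)) := fun v p q =>
    hX.liftHom_apply _ _ _ _ _ _
  -- `φ : Z₃ →+ Z₂`, the comparison map of the commutative square
  let φ : Z₃ →+ Z₂ := hZ₃.liftHom (fun x v => g v x)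
    (fun x x' v => by beta_reduce; exact map_add _ _ _)
    (fun x v v' => by
      have := hX.ext_hom (g (v + v')) (g v + g v') (fun p q => by
        rw [hg, AddMonoidHom.add_apply, hg, hg, hZ₁.add_right, map_add, hZ₂.add_right])
      exact DFunLike.congr_fun this x
      )
    (fun x t v => by
      have := hX.ext_hom ((g v).comp (DistribMulAction.toAddMonoidHom X (op t))) (g (t • v))
        (fun p q => by
          show g v (op t • tpX p q) = _
          rw [hXr, hg, hg, hZ₁.balanced])
      exact DFunLike.congr_fun this x)
  have hφ : ∀ x v, φ (tp₃ x v) = g v x := fun x v => hZ₃.liftHom_apply _ _ _ _ _ _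
  -- the square commutes: `ω ∘ φ = ξ`
  have hωφ : ∀ z, ω (φ z) = ξ z := by
    have key : ∀ v, ω.comp (g v) =
        AddMonoidHom.mk' (fun x => βT x • v) (fun a b => by beta_reduce; rw [map_add, add_smul]) := by
      intro v
      apply hX.ext_hom
      intro p q
      show ω (g v (tpX p q)) = βT (tpX p q) • v
      rw [hg, hω, hαV, hβT]
    have := hZ₃.ext_hom (ω.comp φ) ξ (fun x v => by
      show ω (φ (tp₃ x v)) = ξ (tp₃ x v)
      rw [hφ, hξ]
      exact DFunLike.congr_fun (key v) x)
    exact fun z => DFunLike.congr_fun this z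
  -- `k p : Z₁ →+ Z₃`, sending `tp₁ q v ↦ tp₃ (tpX p q) v`
  let k : P → (Z₁ →+ Z₃) := fun p => hZ₁.liftHom (fun q v => tp₃ (tpX p q) v)
    (fun q q' v => by beta_reduce; rw [hX.add_right, hZ₃.add_left])
    (fun q v v' => by beta_reduce; exact hZ₃.add_right _ _ _)
    (fun q t v => by beta_reduce; rw [← hXr, hZ₃.balanced])
  have hk : ∀ p q v, k p (tp₁ q v) = tp₃ (tpX p q) v := fun p q v =>
    hZ₁.liftHom_apply _ _ _ _ _ _
  -- the inverse `ψ : Z₂ →+ Z₃`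
  have hkbal : ∀ (s : S) (p : P), k (op s • p) =
      (k p).comp ((e.symm.toAddMonoidHom.comp
        (DistribMulAction.toAddMonoidHom (P →ₗ[T] V) s)).comp e.toAddMonoidHom) := by
    intro s p
    apply hZ₁.ext_hom
    intro q v
    show k (op s • p) (tp₁ q v) = k p (e.symm (s • e (tp₁ q v)))
    rw [hk, hX.balanced, he, hsα, ← he (tp₁ (s • q) v), e.symm_apply_apply, hk]
  let ψ : Z₂ →+ Z₃ := hZ₂.liftHom (fun p f => k p (e.symm f))
    (fun p p' f => by
      have := hZ₁.ext_hom (k (p + p')) (k p + k p') (fun q v => by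
        rw [hk, AddMonoidHom.add_apply, hk, hk, hX.add_left, hZ₃.add_left])
      exact DFunLike.congr_fun this (e.symm f))
    (fun p f f' => by beta_reduce; rw [map_add, map_add])
    (fun p s f => by
      beta_reduce
      rw [hkbal s p]
      show k p (e.symm (s • e (e.symm f))) = _
      rw [e.apply_symm_apply])
  have hψ : ∀ p f, ψ (tp₂ p f) = k p (e.symm f) := fun p f => hZ₂.liftHom_apply _ _ _ _ _ _
  -- `ψ ∘ φ = id`
  have hψφ : ∀ z, ψ (φ z) = z := by
    have key : ∀ v : V, ψ.comp (g v) =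
        AddMonoidHom.mk' (fun x => tp₃ x v) (fun a b => hZ₃.add_left a b v) := by
      intro v
      apply hX.ext_hom
      intro p q
      show ψ (g v (tpX p q)) = tp₃ (tpX p q) v
      rw [hg, hψ, ← he, e.symm_apply_apply, hk]
    have := hZ₃.ext_hom (ψ.comp φ) (AddMonoidHom.id Z₃) (fun x v => by
      show ψ (φ (tp₃ x v)) = tp₃ x v
      rw [hφ]
      exact DFunLike.congr_fun (key v) x)
    exact fun z => DFunLike.congr_fun this z
  -- `φ ∘ ψ = id`
  have hφψ : ∀ z, φ (ψ z) = z := by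
    have key : ∀ p : P, φ.comp (k p) =
        AddMonoidHom.mk' (fun z => tp₂ p (αV z)) (fun a b => by
          beta_reduce; rw [map_add, hZ₂.add_right]) := by
      intro p
      apply hZ₁.ext_hom
      intro q v
      show φ (k p (tp₁ q v)) = tp₂ p (αV (tp₁ q v))
      rw [hk, hφ, hg]
    have := hZ₂.ext_hom (φ.comp ψ) (AddMonoidHom.id Z₂) (fun p f => by
      show φ (ψ (tp₂ p f)) = tp₂ p f
      rw [hψ]
      have h2 : φ (k p (e.symm f)) = tp₂ p (αV (e.symm f)) :=
        DFunLike.congr_fun (key p) (e.symm f)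
      rw [h2, ← he, e.apply_symm_apply])
    exact fun z => DFunLike.congr_fun this z
  have hφbij : Function.Bijective φ :=
    Function.bijective_iff_has_inverse.2 ⟨ψ, hψφ, hφψ⟩
  have hψbij : Function.Bijective ψ :=
    Function.bijective_iff_has_inverse.2 ⟨φ, hφψ, hψφ⟩
  constructor
  · intro hωb
    have : (ξ : Z₃ → V) = (ω : Z₂ → V) ∘ φ := funext fun z => (hωφ z).symm
    rw [this]
    exact hωb.comp hφbij
  · intro hξb
    have : (ω : Z₂ → V) = (ξ : Z₃ → V) ∘ ψ := funext fun z => by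
      rw [Function.comp_apply, ← hωφ (ψ z), hφψ]
    rw [this]
    exact hξb.comp hψbij
end

section
/- Let M = (T,S,P,Q,<,>_T,<,>_S) be an injective unital Morita context with trace ideal I = Im(<,>_T). Then for every left T-module V satisfying Q ⊗_T V ≅ Hom_T(P,V) via the canonical map α_V, the unit η_{P,V} : V → Hom_S(Q, Q ⊗_T V) is an isomorphism if and only if the canonical map ζ_{I,V} : V → Hom_T(I,V), v ↦ (i ↦ iv), is an isomorphism. -/
open MulOpposite

/-- Two additive maps out of a balanced tensor product agreeing on pure
tensors are equal. -/
lemma IsBalancedTensor.addHom_ext_s19 {S : Type} [Ring S]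
    {P : Type} [AddCommGroup P] [Module Sᵐᵒᵖ P]
    {Q : Type} [AddCommGroup Q] [Module S Q]
    {X : Type} [AddCommGroup X] {tp : P → Q → X}
    (hX : IsBalancedTensor S P Q X tp)
    {Y : Type} [AddCommGroup Y] (g h : X →+ Y)
    (H : ∀ p q, g (tp p q) = h (tp p q)) : g = h := by
  obtain ⟨k, hk, hu⟩ := hX.lift Y (fun p q => g (tp p q))
    (fun p p' q => by show g (tp (p + p') q) = _; rw [hX.add_left, map_add])
    (fun p q q' => by show g (tp p (q + q')) = _; rw [hX.add_right, map_add])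
    (fun p s q => by show g (tp (op s • p) q) = _; rw [hX.balanced])
  rw [hu g (fun p q => rfl), hu h (fun p q => (H p q).symm)]

variable (T S P Q : Type) [Ring T] [Ring S]
  [AddCommGroup P] [Module T P] [Module Sᵐᵒᵖ P] [SMulCommClass T Sᵐᵒᵖ P]
  [AddCommGroup Q] [Module S Q] [Module Tᵐᵒᵖ Q] [SMulCommClass S Tᵐᵒᵖ Q]

/-- Let `M = (T,S,P,Q,⟨,⟩_T,⟨,⟩_S)` be an injective unital Morita context with
trace ideal `I = Im(⟨,⟩_T)`.  Here `X` realizes `P ⊗_S Q` (with its left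
`T`-module structure), `βT` realizes `⟨,⟩_T`, `Y` realizes `Q ⊗_T P`, `βS`
realizes `⟨,⟩_S`.  For every left `T`-module `V` with `Q ⊗_T V ≅ Hom_T(P,V)`
via the canonical map `α_V`, the unit `η_{P,V} : V → Hom_S(Q, Q ⊗_T V)`,
`v ↦ (q ↦ q ⊗ v)`, is an isomorphism if and only if the canonical map
`ζ_{I,V} : V → Hom_T(I,V)`, `v ↦ (i ↦ i•v)`, is an isomorphism (here
`Hom_T(I,V)` is presented, via `⟨,⟩_T : P ⊗_S Q ≅ I`, as `Hom_T(X,V)`, and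
`ζ v = (x ↦ βT x • v)`). -/
theorem stmt_19 (bT : P → Q → T) (hbT : IsPairing T S P Q bT)
    (bS : Q → P → S) (hbS : IsPairing S T Q P bS)
    (hcomp1 : ∀ (q : Q) (p : P) (q' : Q), bS q p • q' = op (bT p q') • q)
    (hcomp2 : ∀ (p : P) (q : Q) (p' : P), op (bS q p') • p = bT p q • p')
    (X : Type) [AddCommGroup X] [Module T X] (tpX : P → Q → X)
    (hX : IsBalancedTensor S P Q X tpX)
    (hXl : ∀ (t : T) (p : P) (q : Q), t • tpX p q = tpX (t • p) q)
    (βT : X →+ T) (hβT : ∀ p q, βT (tpX p q) = bT p q)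
    (hTinj : Function.Injective βT)
    (Y : Type) [AddCommGroup Y] (tpY : Q → P → Y)
    (hY : IsBalancedTensor T Q P Y tpY)
    (βS : Y →+ S) (hβS : ∀ q p, βS (tpY q p) = bS q p)
    (hSinj : Function.Injective βS)
    (V : Type) [AddCommGroup V] [Module T V]
    (Z₁ : Type) [AddCommGroup Z₁] [Module S Z₁] (tp₁ : Q → V → Z₁)
    (hZ₁ : IsBalancedTensor T Q V Z₁ tp₁)
    (hS₁ : ∀ (s : S) (q : Q) (v : V), s • tp₁ q v = tp₁ (s • q) v)
    (αV : Z₁ →+ (P →ₗ[T] V))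
    (hαV : ∀ (q : Q) (v : V) (p : P), αV (tp₁ q v) p = bT p q • v)
    (hDl : Function.Bijective αV)
    (η : V → (Q →ₗ[S] Z₁)) (hη : ∀ (v : V) (q : Q), η v q = tp₁ q v)
    (ζ : V → (X →ₗ[T] V)) (hζ : ∀ (v : V) (x : X), ζ v x = βT x • v) :
    Function.Bijective η ↔ Function.Bijective ζ := by
  classical
  -- compatibility of αV with the S-action
  have hαS : ∀ (s : S) (z : Z₁) (p : P), αV (s • z) p = αV z (op s • p) := by
    intro s z p
    have hAB := hZ₁.addHom_ext_s19
      (AddMonoidHom.mk' (fun z => αV (s • z) p)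
        (by intro a b; show αV (s • (a + b)) p = _; rw [smul_add, map_add]; rfl))
      (AddMonoidHom.mk' (fun z => αV z (op s • p))
        (by intro a b; show αV (a + b) (op s • p) = _; rw [map_add]; rfl))
      (fun q v => by
        simp only [AddMonoidHom.mk'_apply]
        rw [hS₁, hαV, hαV, hbT.balanced])
    exact DFunLike.congr_fun hAB z
  -- existence of the lift Φ₀ f for each f : Q →ₗ[S] Z₁
  have hlift : ∀ f : Q →ₗ[S] Z₁, ∃ g : X →+ V, ∀ p q, g (tpX p q) = αV (f q) p :=
    fun f => (hX.lift V (fun p q => αV (f q) p)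
      (fun p p' q => (αV (f q)).map_add p p')
      (fun p q q' => by
        show αV (f (q + q')) p = αV (f q) p + αV (f q') p
        rw [f.map_add, map_add]; rfl)
      (fun p s q => by
        show αV (f q) (op s • p) = αV (f (s • q)) p
        rw [f.map_smul]; exact (hαS s (f q) p).symm)).exists
  choose Φ₀ hΦ₀ using hlift
  have hΦlin : ∀ (f : Q →ₗ[S] Z₁) (t : T) (x : X), Φ₀ f (t • x) = t • Φ₀ f x := by
    intro f t x
    have h := hX.addHom_ext_s19
      ((Φ₀ f).comp (AddMonoidHom.mk' (fun x : X => t • x) (smul_add t)))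
      (AddMonoidHom.mk' (fun x => t • Φ₀ f x)
        (by intro a b; show t • Φ₀ f (a + b) = _; rw [map_add, smul_add]))
      (fun p q => by
        simp only [AddMonoidHom.comp_apply, AddMonoidHom.mk'_apply]
        rw [hXl, hΦ₀, hΦ₀, (αV (f q)).map_smul])
    exact DFunLike.congr_fun h x
  set Φ : (Q →ₗ[S] Z₁) → (X →ₗ[T] V) := fun f =>
    { toFun := Φ₀ f
      map_add' := (Φ₀ f).map_add
      map_smul' := hΦlin f } with hΦdef
  have hΦapp : ∀ f p q, Φ f (tpX p q) = αV (f q) p := fun f p q => hΦ₀ f p q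
  -- Φ ∘ η = ζ
  have hcomm : ∀ v, Φ (η v) = ζ v := by
    intro v
    have h := hX.addHom_ext_s19 (Φ (η v)).toAddMonoidHom (ζ v).toAddMonoidHom
      (fun p q => by
        simp only [LinearMap.toAddMonoidHom_coe]
        rw [show ((Φ (η v)) (tpX p q) : V) = αV (η v q) p from hΦapp _ p q,
          hη, hαV, hζ, hβT])
    exact LinearMap.ext fun x => DFunLike.congr_fun h x
  -- Φ is injective
  have hΦinj : Function.Injective Φ := by
    intro f g hfg
    ext q
    apply hDl.1
    ext p
    rw [← hΦapp f p q, ← hΦapp g p q, hfg]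
  -- Φ is surjective
  have hΦsurj : Function.Surjective Φ := by
    intro h
    set L : Q → (P →ₗ[T] V) := fun q =>
      { toFun := fun p => h (tpX p q)
        map_add' := fun p p' => by
          show h (tpX (p + p') q) = _; rw [hX.add_left, map_add]
        map_smul' := fun t p => by
          show h (tpX (t • p) q) = t • h (tpX p q); rw [← hXl, map_smul] } with hLdef
    choose f₀ hf₀ using fun q => hDl.2 (L q)
    have hadd : ∀ q q', f₀ (q + q') = f₀ q + f₀ q' := by
      intro q q'
      apply hDl.1
      rw [map_add, hf₀, hf₀, hf₀]
      ext p
      simp only [hLdef, LinearMap.add_apply, LinearMap.coe_mk, AddHom.coe_mk]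
      rw [hX.add_right, map_add]
    have hsmul : ∀ (s : S) q, f₀ (s • q) = s • f₀ q := by
      intro s q
      apply hDl.1
      rw [hf₀]
      ext p
      rw [hαS s (f₀ q) p, hf₀]
      simp only [hLdef, LinearMap.coe_mk, AddHom.coe_mk]
      rw [hX.balanced]
    set F : Q →ₗ[S] Z₁ :=
      { toFun := f₀
        map_add' := hadd
        map_smul' := hsmul } with hFdef
    refine ⟨F, ?_⟩
    have he := hX.addHom_ext_s19 (Φ F).toAddMonoidHom h.toAddMonoidHom
      (fun p q => by
        simp only [LinearMap.toAddMonoidHom_coe]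
        rw [show (Φ F) (tpX p q) = αV (F q) p from hΦapp F p q]
        show (αV (f₀ q)) p = h (tpX p q)
        rw [hf₀]; rfl)
    exact LinearMap.ext fun x => DFunLike.congr_fun he x
  -- conclude
  have hζeq : ζ = Φ ∘ η := funext fun v => (hcomm v).symm
  constructor
  · intro hb
    rw [hζeq]
    exact ⟨hΦinj.comp hb.1, hΦsurj.comp hb.2⟩
  · intro hb
    constructor
    · intro v w hvw
      apply hb.1
      rw [← hcomm v, ← hcomm w, hvw]
    · intro z
      obtain ⟨v, hv⟩ := hb.2 (Φ z)
      exact ⟨v, hΦinj (by rw [hcomm, hv])⟩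
end
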